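/- Let G be a cyclic group of order q = p^k with generator g, acting on a k[G]-module V over a field k of characteristic p. Set Δ = g − 1 ∈ kG acting on k[V]. Then for each 1 ≤ n < q there is a degree-preserving isomorphism of k[V]^G-modules between ker(Δ^n : k[V] → k[V]) and the module of covariants k[V, V_n]^G, where V_n is the indecomposable kG-module of dimension n. -/
import Mathlib


open MvPolynomial

private lemma telescope_sum {M : Type*} [AddCommGroup M] (g : ℕ → M) :
    ∀ a b : ℕ, a ≤ b →
      (∑ i ∈ Finset.Ico a b, ((-1 : ℤ) ^ (i - a)) • (g (i + 1) + g i))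
        = g a - ((-1 : ℤ) ^ (b - a)) • g b := by
  intro a b hab
  induction b, hab using Nat.le_induction with
  | base => simp
  | succ b hab ih =>
    rw [Finset.sum_Ico_succ_top hab, ih]
    have h1 : b + 1 - a = (b - a) + 1 := by omega
    rw [h1, pow_succ]
    rw [smul_add]
    abel_nf
    simp [smul_smul, mul_comm]

/-- For `G = ⟨g⟩` cyclic of order `q = p^k` acting on `k[V]`
(`char k = p`) with `Δ = g − 1`, for each `1 ≤ n < q` there is a degree-preserving
isomorphism of `k[V]^G`-modules `ker(Δ^n) ≅ k[V, V_n]^G`.  Here the covariants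
`(k[V] ⊗ V_n)^G` are realised as tuples `φ : Fin n → k[V]` (coordinates in the
basis `w_i` of `V_n` with `σ w_i = Σ_{j ≤ i} (−1)^{i−j} w_j`) fixed by the
diagonal action. -/
theorem ker_delta_pow_iso_covariants
    {K : Type*} [Field K] (p s m : ℕ) [Fact p.Prime] [CharP K p]
    (σ : MvPolynomial (Fin m) K ≃ₐ[K] MvPolynomial (Fin m) K)
    (hdeg : ∀ f : MvPolynomial (Fin m) K, (σ f).totalDegree = f.totalDegree)
    (hord : σ ^ (p ^ s) = 1)
    (Δ : MvPolynomial (Fin m) K → MvPolynomial (Fin m) K)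
    (hΔ : ∀ f, Δ f = σ f - f)
    (n : ℕ) (hn1 : 1 ≤ n) (hnq : n < p ^ s) :
    ∃ E : MvPolynomial (Fin m) K →+ (Fin n → MvPolynomial (Fin m) K),
      -- the image of the kernel of Δ^n consists of covariants (G-fixed tuples)
      (∀ f, Δ^[n] f = 0 → ∀ j : Fin n,
          (∑ i : Fin n, if j ≤ i then ((-1 : ℤ) ^ ((i : ℕ) - (j : ℕ))) • σ (E f i) else 0)
            = E f j) ∧
      -- injectivity on ker(Δ^n)
      (∀ f, Δ^[n] f = 0 → E f = 0 → f = 0) ∧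
      -- surjectivity onto the covariants
      (∀ φ : Fin n → MvPolynomial (Fin m) K,
        (∀ j : Fin n,
          (∑ i : Fin n, if j ≤ i then ((-1 : ℤ) ^ ((i : ℕ) - (j : ℕ))) • σ (φ i) else 0)
            = φ j) →
        ∃ f, Δ^[n] f = 0 ∧ E f = φ) ∧
      -- k[V]^G-linearity
      (∀ a f, σ a = a → E (a * f) = fun i => a * E f i) ∧
      -- degree preservation
      (∀ f, Δ^[n] f = 0 →
        (Finset.univ.sup fun i : Fin n => (E f i).totalDegree) = f.totalDegree) := by
  classical
  have hΔadd : ∀ a b, Δ (a + b) = Δ a + Δ b := by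
    intro a b; simp only [hΔ, map_add]; ring
  have hΔ0 : Δ 0 = 0 := by simp [hΔ]
  have hIadd : ∀ (i : ℕ) a b, Δ^[i] (a + b) = Δ^[i] a + Δ^[i] b := by
    intro i
    induction i with
    | zero => intro a b; simp
    | succ i ih =>
        intro a b
        rw [Function.iterate_succ_apply', Function.iterate_succ_apply',
          Function.iterate_succ_apply', ih, hΔadd]
  have hI0 : ∀ i : ℕ, Δ^[i] (0 : MvPolynomial (Fin m) K) = 0 := by
    intro i
    induction i with
    | zero => rfl
    | succ i ih => rw [Function.iterate_succ_apply', ih, hΔ0]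
  have hσΔ : ∀ g, σ g = Δ g + g := by intro g; rw [hΔ]; ring
  refine ⟨{ toFun := fun f i => Δ^[(i : ℕ)] f,
            map_zero' := funext fun i => hI0 i,
            map_add' := fun a b => funext fun i => hIadd i a b }, ?_, ?_, ?_, ?_, ?_⟩
  · -- covariance
    intro f hf j
    simp only [AddMonoidHom.coe_mk, ZeroHom.coe_mk]
    have key : (∑ i : Fin n,
        if j ≤ i then ((-1 : ℤ) ^ ((i : ℕ) - (j : ℕ))) • σ (Δ^[(i : ℕ)] f) else 0)
        = ∑ i ∈ Finset.range n,
            (if (j : ℕ) ≤ i then ((-1 : ℤ) ^ (i - (j : ℕ))) • σ (Δ^[i] f) else 0) := by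
      rw [← Fin.sum_univ_eq_sum_range
        (fun i => if (j : ℕ) ≤ i then ((-1 : ℤ) ^ (i - (j : ℕ))) • σ (Δ^[i] f) else 0) n]
      exact Finset.sum_congr rfl fun i _ => by simp only [Fin.le_def]
    rw [key]
    rw [Finset.range_eq_Ico, ← Finset.sum_Ico_consecutive _ (Nat.zero_le (j : ℕ)) j.isLt.le]
    have h0 : ∑ i ∈ Finset.Ico 0 (j : ℕ),
        (if (j : ℕ) ≤ i then ((-1 : ℤ) ^ (i - (j : ℕ))) • σ (Δ^[i] f) else 0) = 0 := by
      apply Finset.sum_eq_zero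
      intro i hi
      rw [Finset.mem_Ico] at hi
      rw [if_neg (by omega)]
    rw [h0, zero_add]
    have h1 : ∑ i ∈ Finset.Ico (j : ℕ) n,
        (if (j : ℕ) ≤ i then ((-1 : ℤ) ^ (i - (j : ℕ))) • σ (Δ^[i] f) else 0)
        = ∑ i ∈ Finset.Ico (j : ℕ) n,
            ((-1 : ℤ) ^ (i - (j : ℕ))) • (Δ^[i + 1] f + Δ^[i] f) := by
      apply Finset.sum_congr rfl
      intro i hi
      rw [Finset.mem_Ico] at hi
      rw [if_pos hi.1, hσΔ, ← Function.iterate_succ_apply' Δ i f]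
    rw [h1, telescope_sum (fun i => Δ^[i] f) (j : ℕ) n j.isLt.le, hf, smul_zero, sub_zero]
  · -- injectivity
    intro f _ hEf
    have := congrFun hEf ⟨0, hn1⟩
    simpa using this
  · -- surjectivity
    intro φ hφ
    set ψ : ℕ → MvPolynomial (Fin m) K :=
      fun i => if h : i < n then φ ⟨i, h⟩ else 0 with hψdef
    have hψ : ∀ i : Fin n, ψ (i : ℕ) = φ i := by
      intro i; simp [hψdef, i.isLt]
    have hsum : ∀ j : ℕ, j < n →
        (∑ i ∈ Finset.Ico j n, ((-1 : ℤ) ^ (i - j)) • σ (ψ i)) = ψ j := by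
      intro j hj
      have := hφ ⟨j, hj⟩
      have key : (∑ i : Fin n,
          if (⟨j, hj⟩ : Fin n) ≤ i then
            ((-1 : ℤ) ^ ((i : ℕ) - j)) • σ (φ i) else 0)
          = ∑ i ∈ Finset.range n,
              (if j ≤ i then ((-1 : ℤ) ^ (i - j)) • σ (ψ i) else 0) := by
        rw [← Fin.sum_univ_eq_sum_range
          (fun i => if j ≤ i then ((-1 : ℤ) ^ (i - j)) • σ (ψ i) else 0) n]
        refine Finset.sum_congr rfl fun i _ => ?_
        simp only [← hψ, Fin.le_def]
      rw [key] at this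
      rw [Finset.range_eq_Ico,
        ← Finset.sum_Ico_consecutive _ (Nat.zero_le j) hj.le] at this
      have h0 : ∑ i ∈ Finset.Ico 0 j,
          (if j ≤ i then ((-1 : ℤ) ^ (i - j)) • σ (ψ i) else 0) = 0 := by
        apply Finset.sum_eq_zero
        intro i hi
        rw [Finset.mem_Ico] at hi
        rw [if_neg (by omega)]
      rw [h0, zero_add] at this
      have hψj : ψ j = φ ⟨j, hj⟩ := dif_pos hj
      rw [hψj, ← this]
      apply Finset.sum_congr rfl
      intro i hi
      rw [Finset.mem_Ico] at hi
      rw [if_pos hi.1]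
    have hstep : ∀ j : ℕ, Δ (ψ j) = ψ (j + 1) := by
      intro j
      by_cases hj : j < n
      · have h2 : (∑ i ∈ Finset.Ico (j + 1) n, ((-1 : ℤ) ^ (i - (j + 1))) • σ (ψ i))
            = ψ (j + 1) := by
          by_cases hj1 : j + 1 < n
          · exact hsum (j + 1) hj1
          · have : n = j + 1 := by omega
            rw [this, Finset.Ico_self, Finset.sum_empty, hψdef]
            simp [this]
        have h3 := hsum j hj
        rw [Finset.sum_eq_sum_Ico_succ_bot hj] at h3
        simp only [Nat.sub_self, pow_zero, one_smul] at h3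
        have h4 : (∑ i ∈ Finset.Ico (j + 1) n, ((-1 : ℤ) ^ (i - j)) • σ (ψ i))
            = -ψ (j + 1) := by
          rw [← h2, ← Finset.sum_neg_distrib]
          apply Finset.sum_congr rfl
          intro i hi
          rw [Finset.mem_Ico] at hi
          have : i - j = (i - (j + 1)) + 1 := by omega
          rw [this, pow_succ, mul_neg_one, neg_smul]
        rw [h4] at h3
        rw [hΔ]
        linear_combination h3
      · have hj1 : ¬ (j + 1 < n) := by omega
        rw [hψdef]
        simp [hj, hj1, hΔ0]
    have hiter : ∀ i : ℕ, Δ^[i] (ψ 0) = ψ i := by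
      intro i
      induction i with
      | zero => rfl
      | succ i ih => rw [Function.iterate_succ_apply', ih, hstep]
    refine ⟨ψ 0, ?_, ?_⟩
    · rw [hiter n, hψdef]; simp
    · funext i
      simp only [AddMonoidHom.coe_mk, ZeroHom.coe_mk]
      rw [hiter (i : ℕ), hψ]
  · -- linearity
    intro a f ha
    have hmul : ∀ g, Δ (a * g) = a * Δ g := by
      intro g; rw [hΔ, hΔ, map_mul, ha]; ring
    funext i
    simp only [AddMonoidHom.coe_mk, ZeroHom.coe_mk]
    induction (i : ℕ) with
    | zero => rfl
    | succ i ih =>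
        rw [Function.iterate_succ_apply', Function.iterate_succ_apply', ih, hmul]
  · -- degree preservation
    intro f _
    have hdegle : ∀ g : MvPolynomial (Fin m) K, (Δ g).totalDegree ≤ g.totalDegree := by
      intro g
      rw [hΔ, sub_eq_add_neg]
      calc (σ g + -g).totalDegree ≤ max (σ g).totalDegree (-g).totalDegree :=
            totalDegree_add _ _
        _ ≤ g.totalDegree := by rw [hdeg, totalDegree_neg]; simp
    have hIdeg : ∀ i : ℕ, (Δ^[i] f).totalDegree ≤ f.totalDegree := by
      intro i
      induction i with
      | zero => simp
      | succ i ih =>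
          rw [Function.iterate_succ_apply']
          exact le_trans (hdegle _) ih
    apply le_antisymm
    · exact Finset.sup_le fun i _ => hIdeg (i : ℕ)
    · have := Finset.le_sup (f := fun i : Fin n => (Δ^[(i : ℕ)] f).totalDegree)
        (Finset.mem_univ (⟨0, hn1⟩ : Fin n))
      simpa using this
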